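/- Let Q_n be the poset on {1,…,n} in which i < j exactly when i < j as integers and j − i ≥ 2. Then the set L(Q_n) of linear extensions of Q_n, regarded as permutations of {1,…,n} in one-line notation, is equal to the equivalence class ⟨12⋯n⟩ of the identity permutation under the relation ∼ on S_n. -/

import Mathlib

/-- One interchange of two adjacent entries of a word whose values differ by exactly 1. -/
def AdjSwap1 (u v : List ℕ) : Prop :=
  ∃ (p q : List ℕ) (x y : ℕ), ((x : ℤ) - (y : ℤ)).natAbs = 1 ∧
    u = p ++ x :: y :: q ∧ v = p ++ y :: x :: q

namespace Stmt17Aux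

lemma adjSwap1_symm {u v : List ℕ} (h : AdjSwap1 u v) : AdjSwap1 v u := by
  obtain ⟨p, q, x, y, hxy, hu, hv⟩ := h
  exact ⟨p, q, y, x, by omega, hv, hu⟩

/-- The defining property, with order expressed via `Pairwise`. -/
def Good (n : ℕ) (w : List ℕ) : Prop :=
  w.Perm (List.range' 1 n) ∧ w.Pairwise (fun a b => a < b + 2)

lemma cond_iff_pairwise {w : List ℕ} (hnd : w.Nodup) :
    (∀ i j : ℕ, i ∈ w → j ∈ w → i + 2 ≤ j → w.idxOf i < w.idxOf j) ↔
      w.Pairwise (fun a b => a < b + 2) := by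
  constructor
  · intro h
    rw [List.pairwise_iff_getElem]
    intro i j hi hj hij
    by_contra hcon
    push_neg at hcon
    have := h w[j] w[i] (List.getElem_mem _) (List.getElem_mem _) hcon
    rw [hnd.idxOf_getElem, hnd.idxOf_getElem] at this
    omega
  · intro h i j hi hj hij
    have hi' := List.idxOf_lt_length_iff.2 hi
    have hj' := List.idxOf_lt_length_iff.2 hj
    rcases lt_trichotomy (w.idxOf i) (w.idxOf j) with h1 | h1 | h1
    · exact h1
    · exfalso
      have : i = j := (List.idxOf_inj hi).1 h1
      omega
    · exfalso
      have := (List.pairwise_iff_getElem.1 h) _ _ hj' hi' h1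
      rw [List.getElem_idxOf hi', List.getElem_idxOf hj'] at this
      omega

lemma pairwise_swap {R : ℕ → ℕ → Prop} {q : List ℕ} {x y : ℕ}
    (hxy : R x y) (hyx : R y x) :
    ∀ p : List ℕ, List.Pairwise R (p ++ x :: y :: q) ↔ List.Pairwise R (p ++ y :: x :: q)
  | [] => by
    simp only [List.nil_append, List.pairwise_cons]
    constructor <;> rintro ⟨h1, h2, h3⟩
    · refine ⟨?_, ?_, h3⟩
      · intro b hb
        rcases List.mem_cons.1 hb with rfl | hb
        · exact hyx
        · exact h2 b hb
      · intro b hb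
        exact h1 b (List.mem_cons_of_mem _ hb)
    · refine ⟨?_, ?_, h3⟩
      · intro b hb
        rcases List.mem_cons.1 hb with rfl | hb
        · exact hxy
        · exact h2 b hb
      · intro b hb
        exact h1 b (List.mem_cons_of_mem _ hb)
  | a :: p => by
    have hperm : (p ++ x :: y :: q).Perm (p ++ y :: x :: q) :=
      List.Perm.append_left p (List.Perm.swap y x q)
    rw [List.cons_append, List.cons_append, List.pairwise_cons, List.pairwise_cons,
      pairwise_swap hxy hyx p]
    constructor <;> rintro ⟨h1, h2⟩
    · exact ⟨fun b hb => h1 b (hperm.mem_iff.2 hb), h2⟩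
    · exact ⟨fun b hb => h1 b (hperm.mem_iff.1 hb), h2⟩

lemma good_swap {n : ℕ} {u v : List ℕ} (h : AdjSwap1 u v) : Good n u ↔ Good n v := by
  obtain ⟨p, q, x, y, hxy, hu, hv⟩ := h
  subst hu hv
  have hp : (p ++ x :: y :: q).Perm (p ++ y :: x :: q) :=
    List.Perm.append_left p (List.Perm.swap y x q)
  have hx : x < y + 2 := by omega
  have hy : y < x + 2 := by omega
  constructor <;> rintro ⟨h1, h2⟩
  · exact ⟨hp.symm.trans h1, (pairwise_swap (R := fun a b => a < b + 2) hx hy p).1 h2⟩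
  · exact ⟨hp.trans h1, (pairwise_swap (R := fun a b => a < b + 2) hx hy p).2 h2⟩

lemma eqvGen_good {n : ℕ} {a b : List ℕ} (h : Relation.EqvGen AdjSwap1 a b) :
    Good n a ↔ Good n b := by
  induction h with
  | rel _ _ h => exact good_swap h
  | refl => exact Iff.rfl
  | symm _ _ _ ih => exact ih.symm
  | trans _ _ _ _ _ ih1 ih2 => exact ih1.trans ih2

def invCount : List ℕ → ℕ
  | [] => 0
  | a :: t => t.countP (fun b => b < a) + invCount t

lemma invCount_cons (a : ℕ) (t : List ℕ) :
    invCount (a :: t) = t.countP (fun b => b < a) + invCount t := rfl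

lemma invCount_swap {x y : ℕ} (hyx : y < x) :
    ∀ p q : List ℕ, invCount (p ++ y :: x :: q) < invCount (p ++ x :: y :: q)
  | [], q => by
    simp only [List.nil_append, invCount_cons, List.countP_cons]
    have h1 : ¬ (x < y) := by omega
    simp [hyx, h1]
    omega
  | a :: p, q => by
    rw [List.cons_append, List.cons_append, invCount_cons, invCount_cons]
    have hperm : (p ++ y :: x :: q).Perm (p ++ x :: y :: q) :=
      List.Perm.append_left p (List.Perm.swap x y q)
    have h1 := hperm.countP_eq (fun b => b < a)
    have h2 := invCount_swap hyx p q
    omega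

lemma exists_descent : ∀ (l : List ℕ), ¬ l.Chain' (· ≤ ·) →
    ∃ p x y q, l = p ++ x :: y :: q ∧ y < x
  | [], h => absurd List.isChain_nil h
  | [a], h => absurd (List.isChain_singleton a) h
  | a :: b :: t, h => by
    rw [List.Chain', List.isChain_cons_cons] at h
    push_neg at h
    by_cases hab : a ≤ b
    · obtain ⟨p, x, y, q, heq, hlt⟩ := exists_descent (b :: t) (h hab)
      exact ⟨a :: p, x, y, q, by simp [heq], hlt⟩
    · exact ⟨[], a, b, t, rfl, by omega⟩

lemma good_to_eqv (n N : ℕ) : ∀ w, invCount w ≤ N → Good n w →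
    Relation.EqvGen AdjSwap1 (List.range' 1 n) w := by
  induction N using Nat.strong_induction_on with
  | _ N ih =>
    intro w hN hg
    by_cases hw : w = List.range' 1 n
    · subst hw; exact Relation.EqvGen.refl _
    · have hsr : (List.range' 1 n).Pairwise (· ≤ ·) :=
        (List.pairwise_lt_range' (s := 1) (n := n)).imp le_of_lt
      have hns : ¬ w.Pairwise (· ≤ ·) := fun hs =>
        hw (List.Perm.eq_of_pairwise' hs hsr hg.1)
      have hnc : ¬ w.Chain' (· ≤ ·) := fun hc => hns (List.isChain_iff_pairwise.1 hc)
      obtain ⟨p, x, y, q, heq, hlt⟩ := exists_descent w hnc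
      have hxy2 : x < y + 2 := by
        have h2 := heq ▸ hg.2
        have := ((List.pairwise_append.1 h2).2.1)
        exact (List.pairwise_cons.1 this).1 y List.mem_cons_self
      have hnat : ((x : ℤ) - (y : ℤ)).natAbs = 1 := by omega
      have hswap : AdjSwap1 w (p ++ y :: x :: q) := ⟨p, q, x, y, hnat, heq, rfl⟩
      have hgoodv : Good n (p ++ y :: x :: q) := (good_swap hswap).1 hg
      have hinv : invCount (p ++ y :: x :: q) < invCount w := by
        rw [heq]; exact invCount_swap hlt p q
      have hrec := ih (invCount (p ++ y :: x :: q)) (by omega) _ le_rfl hgoodv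
      exact hrec.trans _ _ _ (Relation.EqvGen.rel _ _ (adjSwap1_symm hswap))

end Stmt17Aux

open Stmt17Aux in
/-- The set `L(Qₙ)` of linear extensions of the poset `Qₙ` on `{1,…,n}` (where
`i <_{Qₙ} j` iff `i < j` in `ℤ` and `j - i ≥ 2`), viewed as permutations of
`{1,…,n}` in one-line notation (words in which `i` precedes `j` whenever
`i <_{Qₙ} j`), equals the equivalence class `⟨1 2 ⋯ n⟩` of the identity under the
relation `∼` generated by interchanging adjacent entries differing by one. -/
theorem stmt17 (n : ℕ) :
    {w : List ℕ | w.Perm (List.range' 1 n) ∧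
        ∀ i j : ℕ, i ∈ w → j ∈ w → i + 2 ≤ j → w.idxOf i < w.idxOf j} =
      {w : List ℕ | Relation.EqvGen AdjSwap1 (List.range' 1 n) w} := by
  ext w
  simp only [Set.mem_setOf_eq]
  constructor
  · rintro ⟨h1, h2⟩
    have hnd : w.Nodup := (h1.nodup_iff).2 (List.nodup_range' (s := 1) (n := n))
    have hg : Good n w := ⟨h1, (cond_iff_pairwise hnd).1 h2⟩
    exact good_to_eqv n (invCount w) w le_rfl hg
  · intro h
    have hgr : Good n (List.range' 1 n) :=
      ⟨List.Perm.refl _, (List.pairwise_lt_range' (s := 1) (n := n)).imp (by omega)⟩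
    have hg : Good n w := (eqvGen_good h).1 hgr
    have hnd : w.Nodup := (hg.1.nodup_iff).2 (List.nodup_range' (s := 1) (n := n))
    exact ⟨hg.1, (cond_iff_pairwise hnd).2 hg.2⟩
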